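/- Let θ_{qx}, θ_{qy}, θ_{qz} ∈ [0, π] be the angular distances from a point q on the unit sphere to three mutually orthogonal unit vectors x, y, z. Then |sin θ_{qx}|·|sin θ_{qy}| ≥ |cos θ_{qz}|. -/

import Mathlib

open Real

theorem uncertainty_sphere (q x y z : EuclideanSpace ℝ (Fin 3))
    (hq : ‖q‖ = 1) (hx : ‖x‖ = 1) (hy : ‖y‖ = 1) (hz : ‖z‖ = 1)
    (hxy : inner ℝ x y = (0:ℝ)) (hyz : inner ℝ y z = (0:ℝ)) (hxz : inner ℝ x z = (0:ℝ)) :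
    |Real.sin (Real.arccos (inner ℝ q x))| * |Real.sin (Real.arccos (inner ℝ q y))| ≥
      |Real.cos (Real.arccos (inner ℝ q z))| := by
  have hv : Orthonormal ℝ (![x, y, z]) := by
    have dx : inner ℝ x x = (1:ℝ) := by rw [real_inner_self_eq_norm_sq, hx]; norm_num
    have dy : inner ℝ y y = (1:ℝ) := by rw [real_inner_self_eq_norm_sq, hy]; norm_num
    have dz : inner ℝ z z = (1:ℝ) := by rw [real_inner_self_eq_norm_sq, hz]; norm_num
    have hyx : inner ℝ y x = (0:ℝ) := by rw [real_inner_comm]; exact hxy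
    have hzy : inner ℝ z y = (0:ℝ) := by rw [real_inner_comm]; exact hyz
    have hzx : inner ℝ z x = (0:ℝ) := by rw [real_inner_comm]; exact hxz
    rw [orthonormal_iff_ite]
    intro i j
    fin_cases i <;> fin_cases j <;>
      simp only [Fin.mk_zero, Fin.mk_one, Fin.isValue, Matrix.cons_val_zero, Matrix.cons_val_one,
        Matrix.head_cons, Matrix.cons_val_two, Matrix.tail_cons, Fin.reduceEq, if_true, if_false,
        ite_true, ite_false, reduceIte, Matrix.cons_val, Fin.reduceFinMk] <;>
      assumption
  have hbessel := hv.sum_inner_products_le (s := Finset.univ) q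
  rw [Fin.sum_univ_three] at hbessel
  simp only [Matrix.cons_val_zero, Matrix.cons_val_one, Matrix.head_cons, Matrix.cons_val_two,
    Matrix.tail_cons, Real.norm_eq_abs, sq_abs, hq, one_pow] at hbessel
  have e1 : (inner ℝ x q : ℝ) = inner ℝ q x := real_inner_comm q x
  have e2 : (inner ℝ y q : ℝ) = inner ℝ q y := real_inner_comm q y
  have e3 : (inner ℝ z q : ℝ) = inner ℝ q z := real_inner_comm q z
  set a : ℝ := inner ℝ q x
  set b : ℝ := inner ℝ q y
  set c : ℝ := inner ℝ q z
  rw [e1, e2, e3] at hbessel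
  have key : a ^ 2 + b ^ 2 + c ^ 2 ≤ 1 := hbessel
  have ha1 : a ^ 2 ≤ 1 := by nlinarith [sq_nonneg b, sq_nonneg c]
  have hb1 : b ^ 2 ≤ 1 := by nlinarith [sq_nonneg a, sq_nonneg c]
  have hc1 : |c| ≤ 1 := by
    rw [← Real.sqrt_one, ← Real.sqrt_sq_eq_abs]
    apply Real.sqrt_le_sqrt
    nlinarith [sq_nonneg a, sq_nonneg b]
  obtain ⟨hcl, hcu⟩ := abs_le.mp hc1
  rw [Real.sin_arccos, Real.sin_arccos, Real.cos_arccos hcl hcu]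
  have h1 : (0:ℝ) ≤ 1 - a ^ 2 := by linarith
  have h2 : (0:ℝ) ≤ 1 - b ^ 2 := by linarith
  rw [abs_of_nonneg (Real.sqrt_nonneg _), abs_of_nonneg (Real.sqrt_nonneg _),
    ← Real.sqrt_mul h1]
  rw [ge_iff_le, ← Real.sqrt_sq_eq_abs]
  apply Real.sqrt_le_sqrt
  nlinarith [sq_nonneg (a * b)]
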